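/- Let n ≥ 1, m > 0, and fix i ∈ [n]. Let q̂_{ij} ∈ (0,1] for all j ∈ [n], and let u* ∈ ℝ^n be a unit vector satisfying (u*_j)² ≤ (16n/m)·q̂_{ij} for all j. Let (δ_{ij})_{j∈[n]} be independent {0,1}-valued random variables with P(δ_{ij}=1) = q̂_{ij}. Then for every δ_1 ∈ (0, 3]: P( |∑_{j=1}^n δ_{ij}·(u*_j)²/q̂_{ij} − 1| > δ_1 ) ≤ 2·exp(−δ_1²·m/(64n)). -/

import Mathlib

open MeasureTheory ProbabilityTheory

open Real in
lemma exp_quad_bound {x : ℝ} (hx : |x| ≤ 1) : Real.exp x ≤ 1 + x + (3/4) * x ^ 2 := by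
  have h := Real.exp_bound hx (n := 3) (by norm_num)
  have h2 : ∑ m ∈ Finset.range 3, x ^ m / m.factorial = 1 + x + x ^ 2 / 2 := by
    simp [Finset.sum_range_succ]
  rw [h2] at h
  have h3 : |x| ^ 3 = |x| * x ^ 2 := by
    rw [pow_succ' (|x|) 2, sq_abs]
  have := (abs_sub_le_iff.1 h).1
  rw [h3] at this
  norm_num [Nat.factorial] at this
  nlinarith [abs_nonneg x, sq_nonneg x, mul_le_of_le_one_left (sq_nonneg x) hx]

theorem stmt10 {n : ℕ} (hn : 1 ≤ n) (m : ℝ) (hm : 0 < m) (i : Fin n)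
    (qhat : Fin n → Fin n → ℝ) (hq : ∀ j, qhat i j ∈ Set.Ioc (0 : ℝ) 1)
    (ustar : Fin n → ℝ) (hu : ∑ j, (ustar j) ^ 2 = 1)
    (hub : ∀ j, (ustar j) ^ 2 ≤ (16 * n / m) * qhat i j)
    {Ω : Type*} [MeasureSpace Ω] [IsProbabilityMeasure (ℙ : Measure Ω)]
    (X : Fin n → Ω → ℝ)
    (hmeas : ∀ j, Measurable (X j))
    (hval : ∀ j ω, X j ω = 0 ∨ X j ω = 1)
    (hind : iIndepFun X ℙ)
    (hX : ∀ j, ℙ {ω | X j ω = 1} = ENNReal.ofReal (qhat i j))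
    (δ1 : ℝ) (hδ1 : δ1 ∈ Set.Ioc (0 : ℝ) 3) :
    ℙ {ω | δ1 < |(∑ j, X j ω * (ustar j) ^ 2 / qhat i j) - 1|} ≤
      ENNReal.ofReal (2 * Real.exp (-(δ1 ^ 2 * m) / (64 * n))) := by
  obtain ⟨hδ1pos, hδ13⟩ := hδ1
  have hnpos : (0:ℝ) < n := by exact_mod_cast hn
  have hq0 : ∀ j, 0 < qhat i j := fun j => (hq j).1
  set b : ℝ := 16 * n / m with hb
  have hbpos : 0 < b := by positivity
  set c : Fin n → ℝ := fun j => ustar j ^ 2 / qhat i j with hc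
  have hc0 : ∀ j, 0 ≤ c j := fun j => div_nonneg (sq_nonneg _) (hq0 j).le
  have hcb : ∀ j, c j ≤ b := fun j => (div_le_iff₀ (hq0 j)).2 (hub j)
  have hqc : ∀ j, qhat i j * c j = ustar j ^ 2 := by
    intro j; rw [hc, mul_comm, div_mul_cancel₀ _ (hq0 j).ne']
  have hsum1 : ∑ j, qhat i j * c j = 1 := by
    simp_rw [hqc]; exact hu
  have hsum2 : ∑ j, qhat i j * c j ^ 2 ≤ b := by
    calc ∑ j, qhat i j * c j ^ 2 ≤ ∑ j, (qhat i j * c j) * b := by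
          apply Finset.sum_le_sum; intro j _
          rw [sq, ← mul_assoc]
          exact mul_le_mul_of_nonneg_left (hcb j) (mul_nonneg (hq0 j).le (hc0 j))
      _ = b := by rw [← Finset.sum_mul, hsum1, one_mul]
  set t : ℝ := δ1 * m / (48 * n) with ht
  have htpos : 0 < t := by positivity
  have htb : t * b = δ1 / 3 := by
    rw [ht, hb]; field_simp; ring
  -- Y j = X j * c j
  set Y : Fin n → Ω → ℝ := fun j ω => X j ω * c j with hY
  have hYmeas : ∀ j, Measurable (Y j) := fun j => (hmeas j).mul_const _
  have hYind : iIndepFun Y ℙ := by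
    exact hind.comp (fun j x => x * c j) (fun j => measurable_mul_const _)
  -- integral of X j
  have hXint : ∀ j, Integrable (X j) ℙ := by
    intro j
    refine Integrable.mono' (integrable_const 1) (hmeas j).aestronglyMeasurable ?_
    filter_upwards with ω
    rcases hval j ω with h | h <;> simp [h]
  have hEX : ∀ j, ∫ ω, X j ω = qhat i j := by
    intro j
    have hXind : X j = Set.indicator {ω | X j ω = 1} (1 : Ω → ℝ) := by
      funext ω
      rcases hval j ω with h | h <;> simp [Set.indicator_apply, h]
    have hms : MeasurableSet {ω | X j ω = 1} := hmeas j (measurableSet_singleton 1)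
    rw [hXind]
    rw [MeasureTheory.integral_indicator_one hms, measureReal_def, hX j,
      ENNReal.toReal_ofReal (hq0 j).le]
  -- pointwise identity for exp(s * Y j)
  have hptwise : ∀ (s : ℝ) (j : Fin n),
      (fun ω => Real.exp (s * Y j ω)) = fun ω => 1 + X j ω * (Real.exp (s * c j) - 1) := by
    intro s j
    funext ω
    rcases hval j ω with h | h <;> simp [hY, h]
  have hint : ∀ (s : ℝ) (j : Fin n), Integrable (fun ω => Real.exp (s * Y j ω)) ℙ := by
    intro s j
    rw [hptwise s j]
    exact (integrable_const 1).add ((hXint j).mul_const _)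
  have hmgfY : ∀ (s : ℝ) (j : Fin n),
      mgf (Y j) ℙ s = 1 + qhat i j * (Real.exp (s * c j) - 1) := by
    intro s j
    rw [mgf, hptwise s j, integral_add (integrable_const 1) ((hXint j).mul_const _),
      integral_mul_const, hEX j]
    simp [mul_comm]
  set S : Ω → ℝ := fun ω => ∑ j, Y j ω with hS
  have hSeq : S = ∑ j, Y j := by funext ω; simp [hS, Finset.sum_apply]
  have hSmeas : Measurable S := by
    apply Finset.measurable_sum
    exact fun j _ => hYmeas j
  have hmgfS : ∀ s : ℝ, mgf S ℙ s = ∏ j, (1 + qhat i j * (Real.exp (s * c j) - 1)) := by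
    intro s
    rw [hSeq, hYind.mgf_sum hYmeas]
    exact Finset.prod_congr rfl fun j _ => hmgfY s j
  have hkey : ∀ s : ℝ, |s| ≤ t → mgf S ℙ s ≤ Real.exp (s + (3/4) * t^2 * b) := by
    intro s hs
    rw [hmgfS s]
    calc ∏ j, (1 + qhat i j * (Real.exp (s * c j) - 1))
        ≤ ∏ j, Real.exp (qhat i j * (Real.exp (s * c j) - 1)) := by
          apply Finset.prod_le_prod
          · intro j _
            have he : (0:ℝ) < Real.exp (s * c j) := Real.exp_pos _
            nlinarith [(hq j).2, (hq0 j).le]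
          · intro j _
            linarith [Real.add_one_le_exp (qhat i j * (Real.exp (s * c j) - 1))]
      _ = Real.exp (∑ j, qhat i j * (Real.exp (s * c j) - 1)) := (Real.exp_sum _ _).symm
      _ ≤ Real.exp (s + (3/4) * t^2 * b) := by
          apply Real.exp_le_exp.mpr
          have hbnd : ∀ j, qhat i j * (Real.exp (s * c j) - 1) ≤
              s * (qhat i j * c j) + (3/4) * t^2 * (qhat i j * c j ^ 2) := by
            intro j
            have habs : |s * c j| ≤ 1 := by
              rw [abs_mul, abs_of_nonneg (hc0 j)]
              have h1 : |s| * c j ≤ t * b :=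
                mul_le_mul hs (hcb j) (hc0 j) htpos.le
              rw [htb] at h1; linarith
            have hq2 := exp_quad_bound habs
            have hsc : (s * c j) ^ 2 ≤ t ^ 2 * c j ^ 2 := by
              have h2 : |s| ^ 2 ≤ t ^ 2 := by nlinarith [abs_nonneg s]
              rw [mul_pow]
              nlinarith [sq_abs s, sq_nonneg (c j)]
            nlinarith [(hq0 j).le, sq_nonneg (c j)]
          calc ∑ j, qhat i j * (Real.exp (s * c j) - 1)
              ≤ ∑ j, (s * (qhat i j * c j) + (3/4) * t^2 * (qhat i j * c j ^ 2)) :=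
                Finset.sum_le_sum fun j _ => hbnd j
            _ = s * ∑ j, qhat i j * c j + (3/4)*t^2 * ∑ j, qhat i j * c j ^ 2 := by
                rw [Finset.sum_add_distrib, ← Finset.mul_sum, ← Finset.mul_sum]
            _ ≤ s + (3/4)*t^2*b := by
                rw [hsum1, mul_one]
                have := mul_le_mul_of_nonneg_left hsum2 (by positivity : (0:ℝ) ≤ (3/4)*t^2)
                linarith
  have hSbound : ∀ ω, |S ω| ≤ ∑ j, c j := by
    intro ω
    rw [abs_of_nonneg (Finset.sum_nonneg fun j _ => by
      rcases hval j ω with h | h <;> simp [hY, h, hc0 j])]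
    apply Finset.sum_le_sum
    intro j _
    rcases hval j ω with h | h <;> simp [hY, h, hc0 j]
  have hSint : ∀ s : ℝ, Integrable (fun ω => Real.exp (s * S ω)) ℙ := by
    intro s
    refine Integrable.mono' (integrable_const (Real.exp (|s| * ∑ j, c j)))
      ((hSmeas.const_mul s).exp.aestronglyMeasurable) ?_
    filter_upwards with ω
    rw [Real.norm_eq_abs, abs_of_pos (Real.exp_pos _)]
    apply Real.exp_le_exp.mpr
    calc s * S ω ≤ |s * S ω| := le_abs_self _
      _ = |s| * |S ω| := abs_mul _ _
      _ ≤ |s| * ∑ j, c j := mul_le_mul_of_nonneg_left (hSbound ω) (abs_nonneg s)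
  have hexp1 : -t * (1 + δ1) + (t + (3/4)*t^2*b) = -(δ1^2*m)/(64*n) := by
    rw [ht, hb]; field_simp; ring
  have hupper : (ℙ {ω | 1 + δ1 ≤ S ω}).toReal ≤ Real.exp (-(δ1^2*m)/(64*n)) := by
    calc (ℙ {ω | 1 + δ1 ≤ S ω}).toReal ≤ Real.exp (-t * (1+δ1)) * mgf S ℙ t :=
          measure_ge_le_exp_mul_mgf (1+δ1) htpos.le (hSint t)
      _ ≤ Real.exp (-t*(1+δ1)) * Real.exp (t + (3/4)*t^2*b) :=
          mul_le_mul_of_nonneg_left (hkey t (by rw [abs_of_pos htpos])) (Real.exp_pos _).le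
      _ = Real.exp (-(δ1^2*m)/(64*n)) := by rw [← Real.exp_add, hexp1]
  have hexp2 : -t * (δ1 - 1) + (-t + (3/4)*t^2*b) = -(δ1^2*m)/(64*n) := by
    rw [ht, hb]; field_simp; ring
  have hlower : (ℙ {ω | δ1 - 1 ≤ -S ω}).toReal ≤ Real.exp (-(δ1^2*m)/(64*n)) := by
    have hintneg : Integrable (fun ω => Real.exp (t * (-S) ω)) ℙ := by
      simpa [neg_mul, mul_neg] using hSint (-t)
    have hset : {ω | δ1 - 1 ≤ -S ω} = {ω | δ1 - 1 ≤ (-S) ω} := rfl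
    rw [hset]
    calc (ℙ {ω | δ1 - 1 ≤ (-S) ω}).toReal ≤ Real.exp (-t * (δ1-1)) * mgf (-S) ℙ t :=
          measure_ge_le_exp_mul_mgf (δ1-1) htpos.le hintneg
      _ ≤ Real.exp (-t*(δ1-1)) * Real.exp (-t + (3/4)*t^2*b) := by
          rw [mgf_neg]
          exact mul_le_mul_of_nonneg_left
            (hkey (-t) (by rw [abs_neg, abs_of_pos htpos])) (Real.exp_pos _).le
      _ = Real.exp (-(δ1^2*m)/(64*n)) := by rw [← Real.exp_add, hexp2]
  have hsub : {ω | δ1 < |(∑ j, X j ω * (ustar j)^2 / qhat i j) - 1|} ⊆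
      {ω | 1 + δ1 ≤ S ω} ∪ {ω | δ1 - 1 ≤ -S ω} := by
    intro ω hω
    have hSω : S ω = ∑ j, X j ω * (ustar j)^2 / qhat i j := by
      simp [hS, hY, hc, mul_div_assoc]
    simp only [Set.mem_setOf_eq] at hω
    rw [← hSω] at hω
    rcases lt_abs.mp hω with h | h
    · left; simp only [Set.mem_setOf_eq]; linarith
    · right; simp only [Set.mem_setOf_eq]; linarith
  calc ℙ {ω | δ1 < |(∑ j, X j ω * (ustar j)^2 / qhat i j) - 1|}
      ≤ ℙ ({ω | 1 + δ1 ≤ S ω} ∪ {ω | δ1 - 1 ≤ -S ω}) := measure_mono hsub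
    _ ≤ ℙ {ω | 1 + δ1 ≤ S ω} + ℙ {ω | δ1 - 1 ≤ -S ω} := measure_union_le _ _
    _ ≤ ENNReal.ofReal (Real.exp (-(δ1^2*m)/(64*n))) +
        ENNReal.ofReal (Real.exp (-(δ1^2*m)/(64*n))) := by
        gcongr
        · rw [← ENNReal.ofReal_toReal (measure_ne_top ℙ _)]
          exact ENNReal.ofReal_le_ofReal hupper
        · rw [← ENNReal.ofReal_toReal (measure_ne_top ℙ _)]
          exact ENNReal.ofReal_le_ofReal hlower
    _ = ENNReal.ofReal (2 * Real.exp (-(δ1 ^ 2 * m) / (64 * n))) := by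
        rw [← ENNReal.ofReal_add (Real.exp_pos _).le (Real.exp_pos _).le, two_mul]
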